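/- Assume the TBT matrix T is invertible. Then for all complex μ1, μ2 not in {i/2, −i/2}: u(μ) = ((μ1 − i/2)/(μ1 + i/2))^n · ((μ2 − i/2)/(μ2 + i/2))^m · û(μ)^τ · diag{J_{2m}U_{2m}, J_{2n}U_{2n}}, where ^τ denotes the transpose (without conjugation). -/

import Mathlib

open Matrix

noncomputable section

/-- The scalar sequence `a_r`: `0` for `r < 0`, `i/2` for `r = 0`, `i` for `r > 0`. -/
def aC (r : ℤ) : ℂ := if r < 0 then 0 else if r = 0 then Complex.I / 2 else Complex.I

/-- `A_1`: block matrix `{𝒜_{1,p−q}}` with blocks `0`, `(i/2)I_m`, `i·I_m`. -/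
def A1 (m n : ℕ) : Matrix (Fin n × Fin m) (Fin n × Fin m) ℂ :=
  Matrix.of fun r c => if r.2 = c.2 then aC (((r.1 : ℕ) : ℤ) - ((c.1 : ℕ) : ℤ)) else 0

/-- `A_2 = diag{𝒜_{2,0}, …, 𝒜_{2,0}}`. -/
def A2 (m n : ℕ) : Matrix (Fin n × Fin m) (Fin n × Fin m) ℂ :=
  Matrix.of fun r c => if r.1 = c.1 then aC (((r.2 : ℕ) : ℤ) - ((c.2 : ℕ) : ℤ)) else 0

/-- `𝒜_1 = {a_{j−ℓ}}_{j,ℓ=1}^n`. -/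
def calA1 (n : ℕ) : Matrix (Fin n) (Fin n) ℂ :=
  Matrix.of fun p q => aC (((p : ℕ) : ℤ) - ((q : ℕ) : ℤ))

/-- `𝒜_2 = {a_{j−ℓ}}_{j,ℓ=1}^m`. -/
def calA2 (m : ℕ) : Matrix (Fin m) (Fin m) ℂ :=
  Matrix.of fun j l => aC (((j : ℕ) : ℤ) - ((l : ℕ) : ℤ))

/-- The Toeplitz-block Toeplitz matrix `T`, entry `t_{p−q}^{(j−ℓ)}`. -/
def TBT (m n : ℕ) (t : ℤ → ℤ → ℂ) : Matrix (Fin n × Fin m) (Fin n × Fin m) ℂ :=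
  Matrix.of fun r c =>
    t (((r.1 : ℕ) : ℤ) - ((c.1 : ℕ) : ℤ)) (((r.2 : ℕ) : ℤ) - ((c.2 : ℕ) : ℤ))

/-- `M_{11}`: block column, `p`-th block `(1/2)𝒯_0 + Σ_{s=1}^{p−1} 𝒯_s`. -/
def M11 (m n : ℕ) (t : ℤ → ℤ → ℂ) : Matrix (Fin n × Fin m) (Fin m) ℂ :=
  Matrix.of fun r l => (1 / 2 : ℂ) * t 0 (((r.2 : ℕ) : ℤ) - ((l : ℕ) : ℤ))
    + ∑ s ∈ Finset.range (r.1 : ℕ), t ((s : ℤ) + 1) (((r.2 : ℕ) : ℤ) - ((l : ℕ) : ℤ))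

/-- `M_{21} = [I_m I_m … I_m]`. -/
def M21 (m n : ℕ) : Matrix (Fin m) (Fin n × Fin m) ℂ :=
  Matrix.of fun j c => if j = c.2 then 1 else 0

/-- `M_{31} = M_{21}^*`. -/
def M31 (m n : ℕ) : Matrix (Fin n × Fin m) (Fin m) ℂ := (M21 m n)ᴴ

/-- `M_{41}`: block row, `q`-th block `(1/2)𝒯_0 + Σ_{s=1}^{q−1} 𝒯_{−s}`. -/
def M41 (m n : ℕ) (t : ℤ → ℤ → ℂ) : Matrix (Fin m) (Fin n × Fin m) ℂ :=
  Matrix.of fun j c => (1 / 2 : ℂ) * t 0 (((j : ℕ) : ℤ) - ((c.2 : ℕ) : ℤ))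
    + ∑ s ∈ Finset.range (c.1 : ℕ), t (-((s : ℤ) + 1)) (((j : ℕ) : ℤ) - ((c.2 : ℕ) : ℤ))

/-- `j`-th entry of the column `ℳ_{12}^{(r)}`. -/
def m12e (m : ℕ) (t : ℤ → ℤ → ℂ) (r : ℤ) (j : Fin m) : ℂ :=
  (1 / 2 : ℂ) * t r 0 + ∑ s ∈ Finset.range (j : ℕ), t r ((s : ℤ) + 1)

/-- `ℓ`-th entry of the row `ℳ_{42}^{(r)}`. -/
def m42e (m : ℕ) (t : ℤ → ℤ → ℂ) (r : ℤ) (l : Fin m) : ℂ :=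
  (1 / 2 : ℂ) * t r 0 + ∑ s ∈ Finset.range (l : ℕ), t r (-((s : ℤ) + 1))

/-- `M_{12} = {ℳ_{12}^{(p−q)}}`. -/
def M12 (m n : ℕ) (t : ℤ → ℤ → ℂ) : Matrix (Fin n × Fin m) (Fin n) ℂ :=
  Matrix.of fun r q => m12e m t (((r.1 : ℕ) : ℤ) - ((q : ℕ) : ℤ)) r.2

/-- `M_{22}`. -/
def M22 (m n : ℕ) : Matrix (Fin n) (Fin n × Fin m) ℂ :=
  Matrix.of fun p c => if p = c.1 then 1 else 0

/-- `M_{32} = M_{22}^*`. -/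
def M32 (m n : ℕ) : Matrix (Fin n × Fin m) (Fin n) ℂ := (M22 m n)ᴴ

/-- `M_{42} = {ℳ_{42}^{(p−q)}}`. -/
def M42 (m n : ℕ) (t : ℤ → ℤ → ℂ) : Matrix (Fin n) (Fin n × Fin m) ℂ :=
  Matrix.of fun p c => m42e m t (((p : ℕ) : ℤ) - ((c.1 : ℕ) : ℤ)) c.2

/-- `K`: the `1×mn` row, `q`-th block `(1/2)ℳ_{42}^{(0)} + Σ_{s=1}^{q−1} ℳ_{42}^{(−s)}`. -/
def Krow (m n : ℕ) (t : ℤ → ℤ → ℂ) : (Fin n × Fin m) → ℂ :=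
  fun c => (1 / 2 : ℂ) * m42e m t 0 c.2
    + ∑ s ∈ Finset.range (c.1 : ℕ), m42e m t (-((s : ℤ) + 1)) c.2

/-- `K_{11}`: `p`-th row `(1/2)ℳ_{42}^{(0)} + Σ_{s=1}^{p−1} ℳ_{42}^{(s)}`. -/
def K11 (m n : ℕ) (t : ℤ → ℤ → ℂ) : Matrix (Fin n) (Fin m) ℂ :=
  Matrix.of fun p l => (1 / 2 : ℂ) * m42e m t 0 l
    + ∑ s ∈ Finset.range (p : ℕ), m42e m t ((s : ℤ) + 1) l

/-- `K_{12}`: `q`-th column `(1/2)ℳ_{12}^{(0)} + Σ_{s=1}^{q−1} ℳ_{12}^{(−s)}`. -/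
def K12 (m n : ℕ) (t : ℤ → ℤ → ℂ) : Matrix (Fin m) (Fin n) ℂ :=
  Matrix.of fun j q => (1 / 2 : ℂ) * m12e m t 0 j
    + ∑ s ∈ Finset.range (q : ℕ), m12e m t (-((s : ℤ) + 1)) j

/-- `Π_1 = [M_{11} M_{31}]`. -/
def Pi1 (m n : ℕ) (t : ℤ → ℤ → ℂ) : Matrix (Fin n × Fin m) (Fin m ⊕ Fin m) ℂ :=
  fromCols (M11 m n t) (M31 m n)

/-- `Π_2 = [M_{12} M_{32}]`. -/
def Pi2 (m n : ℕ) (t : ℤ → ℤ → ℂ) : Matrix (Fin n × Fin m) (Fin n ⊕ Fin n) ℂ :=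
  fromCols (M12 m n t) (M32 m n)

/-- `Π̂_1 = col[M_{21}; M_{41}]`. -/
def PiHat1 (m n : ℕ) (t : ℤ → ℤ → ℂ) : Matrix (Fin m ⊕ Fin m) (Fin n × Fin m) ℂ :=
  fromRows (M21 m n) (M41 m n t)

/-- `Π̂_2 = col[M_{22}; M_{42}]`. -/
def PiHat2 (m n : ℕ) (t : ℤ → ℤ → ℂ) : Matrix (Fin n ⊕ Fin n) (Fin n × Fin m) ℂ :=
  fromRows (M22 m n) (M42 m n t)

/-- All-ones vector. -/
def onesV (k : Type*) : k → ℂ := fun _ => 1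

/-- `g_{12} = i·Π̂_1 T^{-1} Π_2 − i·[[𝟏_m 𝟏_n^*, 0],[K_{12}, 0]]`. -/
def g12M (m n : ℕ) (t : ℤ → ℤ → ℂ) : Matrix (Fin m ⊕ Fin m) (Fin n ⊕ Fin n) ℂ :=
  Complex.I • (PiHat1 m n t * (TBT m n t)⁻¹ * Pi2 m n t)
    - Complex.I • fromBlocks (vecMulVec (onesV (Fin m)) (onesV (Fin n))) 0 (K12 m n t) 0

/-- `g_{21} = i·Π̂_2 T^{-1} Π_1 − i·[[𝟏_n 𝟏_m^*, 0],[K_{11}, 0]]`. -/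
def g21M (m n : ℕ) (t : ℤ → ℤ → ℂ) : Matrix (Fin n ⊕ Fin n) (Fin m ⊕ Fin m) ℂ :=
  Complex.I • (PiHat2 m n t * (TBT m n t)⁻¹ * Pi1 m n t)
    - Complex.I • fromBlocks (vecMulVec (onesV (Fin n)) (onesV (Fin m))) 0 (K11 m n t) 0

/-- The `k×k` flip (anti-diagonal) matrix. -/
def flipU (k : ℕ) : Matrix (Fin k) (Fin k) ℂ :=
  Matrix.of fun p q => if (p : ℕ) + (q : ℕ) + 1 = k then 1 else 0

/-- `U_{2k}`, the `2k×2k` flip matrix on the sum type. -/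
def U2 (k : ℕ) : Matrix (Fin k ⊕ Fin k) (Fin k ⊕ Fin k) ℂ :=
  fromBlocks 0 (flipU k) (flipU k) 0

/-- `J_{2k} = diag{I_k, −I_k}`. -/
def J2 (k : ℕ) : Matrix (Fin k ⊕ Fin k) (Fin k ⊕ Fin k) ℂ :=
  fromBlocks 1 0 0 (-1)

/-- `U = U_{mn}`, the `mn×mn` flip matrix (global index `m·p + j`). -/
def UmnM (m n : ℕ) : Matrix (Fin n × Fin m) (Fin n × Fin m) ℂ :=
  Matrix.of fun r c =>
    if m * (r.1 : ℕ) + (r.2 : ℕ) + (m * (c.1 : ℕ) + (c.2 : ℕ)) + 1 = m * n then 1 else 0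

/-- `ψ(λ) = (λ + i/2)/(λ − i/2)`. -/
def psiM (l : ℂ) : ℂ := (l + Complex.I / 2) / (l - Complex.I / 2)

/-- `h(y_1, y_2)`, entry `y_1^{p−1} y_2^{j−1}`. -/
def hVec (m n : ℕ) (y1 y2 : ℂ) : (Fin n × Fin m) → ℂ :=
  fun r => y1 ^ (r.1 : ℕ) * y2 ^ (r.2 : ℕ)

/-- `ω(λ,μ) = 𝟏^*(A_1^*−μ_1)^{-1}(A_2^*−μ_2)^{-1}T^{-1}(A_2−λ_2)^{-1}(A_1−λ_1)^{-1}𝟏`. -/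
def omegaF (m n : ℕ) (t : ℤ → ℤ → ℂ) (l1 l2 u1 u2 : ℂ) : ℂ :=
  star (onesV (Fin n × Fin m)) ⬝ᵥ
    ((((A1 m n)ᴴ - u1 • 1)⁻¹ * ((A2 m n)ᴴ - u2 • 1)⁻¹ * (TBT m n t)⁻¹ *
      (A2 m n - l2 • 1)⁻¹ * (A1 m n - l1 • 1)⁻¹) *ᵥ onesV (Fin n × Fin m))

/-- `ρ(y,z) = h(conj z_1, conj z_2)^* T^{-1} h(y_1,y_2)`. -/
def rhoF (m n : ℕ) (t : ℤ → ℤ → ℂ) (y1 y2 z1 z2 : ℂ) : ℂ :=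
  star (hVec m n ((starRingEnd ℂ) z1) ((starRingEnd ℂ) z2)) ⬝ᵥ
    ((TBT m n t)⁻¹ *ᵥ hVec m n y1 y2)

/-- `Γ_1 = T^{-1}Π_1`. -/
def Gam1 (m n : ℕ) (t : ℤ → ℤ → ℂ) : Matrix (Fin n × Fin m) (Fin m ⊕ Fin m) ℂ :=
  (TBT m n t)⁻¹ * Pi1 m n t

/-- `Γ_2 = T^{-1}Π_2`. -/
def Gam2 (m n : ℕ) (t : ℤ → ℤ → ℂ) : Matrix (Fin n × Fin m) (Fin n ⊕ Fin n) ℂ :=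
  (TBT m n t)⁻¹ * Pi2 m n t

/-- `Γ̂_1 = Π̂_1 T^{-1}`. -/
def GamHat1 (m n : ℕ) (t : ℤ → ℤ → ℂ) : Matrix (Fin m ⊕ Fin m) (Fin n × Fin m) ℂ :=
  PiHat1 m n t * (TBT m n t)⁻¹

/-- `Γ̂_2 = Π̂_2 T^{-1}`. -/
def GamHat2 (m n : ℕ) (t : ℤ → ℤ → ℂ) : Matrix (Fin n ⊕ Fin n) (Fin n × Fin m) ℂ :=
  PiHat2 m n t * (TBT m n t)⁻¹

/-- `Γ = [Γ_1 Γ_2]`. -/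
def GammaFull (m n : ℕ) (t : ℤ → ℤ → ℂ) :
    Matrix (Fin n × Fin m) ((Fin m ⊕ Fin m) ⊕ (Fin n ⊕ Fin n)) ℂ :=
  fromCols (Gam1 m n t) (Gam2 m n t)

/-- `Γ̂ = col[Γ̂_1; Γ̂_2]`. -/
def GammaHatFull (m n : ℕ) (t : ℤ → ℤ → ℂ) :
    Matrix ((Fin m ⊕ Fin m) ⊕ (Fin n ⊕ Fin n)) (Fin n × Fin m) ℂ :=
  fromRows (GamHat1 m n t) (GamHat2 m n t)

/-- The row vector `u(μ)`. -/
def uRow (m n : ℕ) (t : ℤ → ℤ → ℂ) (u1 u2 : ℂ) :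
    ((Fin m ⊕ Fin m) ⊕ (Fin n ⊕ Fin n)) → ℂ :=
  star (onesV (Fin n × Fin m)) ᵥ*
      (((A1 m n)ᴴ - u1 • 1)⁻¹ * ((A2 m n)ᴴ - u2 • 1)⁻¹ * GammaFull m n t)
    - Complex.I • Sum.elim
        (Sum.elim (star (onesV (Fin m)) ᵥ* ((calA2 m)ᴴ - u2 • 1)⁻¹) (0 : Fin m → ℂ))
        (Sum.elim (star (onesV (Fin n)) ᵥ* ((calA1 n)ᴴ - u1 • 1)⁻¹) (0 : Fin n → ℂ))

/-- The column vector `û(λ)`. -/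
def uHatCol (m n : ℕ) (t : ℤ → ℤ → ℂ) (l1 l2 : ℂ) :
    ((Fin m ⊕ Fin m) ⊕ (Fin n ⊕ Fin n)) → ℂ :=
  (GammaHatFull m n t * (A2 m n - l2 • 1)⁻¹ * (A1 m n - l1 • 1)⁻¹) *ᵥ onesV (Fin n × Fin m)
    + Complex.I • Sum.elim
        (Sum.elim (0 : Fin m → ℂ) ((calA2 m - l2 • 1)⁻¹ *ᵥ onesV (Fin m)))
        (Sum.elim (0 : Fin n → ℂ) ((calA1 n - l1 • 1)⁻¹ *ᵥ onesV (Fin n)))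

/-- `P_1 = diag{I_{2m}, 0}`. -/
def P1M (m n : ℕ) :
    Matrix ((Fin m ⊕ Fin m) ⊕ (Fin n ⊕ Fin n)) ((Fin m ⊕ Fin m) ⊕ (Fin n ⊕ Fin n)) ℂ :=
  fromBlocks 1 0 0 0

/-- `P_2 = I − P_1`. -/
def P2M (m n : ℕ) :
    Matrix ((Fin m ⊕ Fin m) ⊕ (Fin n ⊕ Fin n)) ((Fin m ⊕ Fin m) ⊕ (Fin n ⊕ Fin n)) ℂ :=
  1 - P1M m n

/-- `G(λ)`, built from `g_{12}` and `g_{21}`. -/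
def GMat (m n : ℕ) (g12 : Matrix (Fin m ⊕ Fin m) (Fin n ⊕ Fin n) ℂ)
    (g21 : Matrix (Fin n ⊕ Fin n) (Fin m ⊕ Fin m) ℂ) (l1 l2 : ℂ) :
    Matrix ((Fin m ⊕ Fin m) ⊕ (Fin n ⊕ Fin n)) ((Fin m ⊕ Fin m) ⊕ (Fin n ⊕ Fin n)) ℂ :=
  fromBlocks (fromBlocks (calA2 m - l2 • 1) 0 0 (calA2 m - l2 • 1)) g12
             g21 (fromBlocks (calA1 n - l1 • 1) 0 0 (calA1 n - l1 • 1))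

/-- `G` as a matrix over the polynomial ring `ℂ[λ_1, λ_2]` (variables `X 0 = λ_1`, `X 1 = λ_2`). -/
def GPoly (m n : ℕ) (g12 : Matrix (Fin m ⊕ Fin m) (Fin n ⊕ Fin n) ℂ)
    (g21 : Matrix (Fin n ⊕ Fin n) (Fin m ⊕ Fin m) ℂ) :
    Matrix ((Fin m ⊕ Fin m) ⊕ (Fin n ⊕ Fin n)) ((Fin m ⊕ Fin m) ⊕ (Fin n ⊕ Fin n))
      (MvPolynomial (Fin 2) ℂ) :=
  fromBlocks
    (fromBlocks ((calA2 m).map MvPolynomial.C - (MvPolynomial.X 1 : MvPolynomial (Fin 2) ℂ) • 1) 0 0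
      ((calA2 m).map MvPolynomial.C - (MvPolynomial.X 1 : MvPolynomial (Fin 2) ℂ) • 1))
    (g12.map MvPolynomial.C)
    (g21.map MvPolynomial.C)
    (fromBlocks ((calA1 n).map MvPolynomial.C - (MvPolynomial.X 0 : MvPolynomial (Fin 2) ℂ) • 1) 0 0
      ((calA1 n).map MvPolynomial.C - (MvPolynomial.X 0 : MvPolynomial (Fin 2) ℂ) • 1))

/-- The vector `col[0_m; 𝟏_m; 0_n; 𝟏_n]`. -/
def eVec (m n : ℕ) : ((Fin m ⊕ Fin m) ⊕ (Fin n ⊕ Fin n)) → ℂ :=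
  Sum.elim (Sum.elim (0 : Fin m → ℂ) (onesV (Fin m))) (Sum.elim (0 : Fin n → ℂ) (onesV (Fin n)))

/-- `diag{J_{2m}U_{2m}, J_{2n}U_{2n}}`. -/
def DJU (m n : ℕ) :
    Matrix ((Fin m ⊕ Fin m) ⊕ (Fin n ⊕ Fin n)) ((Fin m ⊕ Fin m) ⊕ (Fin n ⊕ Fin n)) ℂ :=
  fromBlocks (J2 m * U2 m) 0 0 (J2 n * U2 n)

/-- The block column `col[I_m; I_m; …; I_m]`. -/
def EcolId (m n : ℕ) : Matrix (Fin n × Fin m) (Fin m) ℂ :=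
  Matrix.of fun r l => if r.2 = l then 1 else 0


open Finset Kronecker

def gvv (r : ℕ) (l : ℂ) : Fin r → ℂ := fun k => -(psiM l ^ (k : ℕ)) / (l - Complex.I / 2)

lemma hd_ne {l : ℂ} (h : l ≠ Complex.I / 2) : l - Complex.I / 2 ≠ 0 := sub_ne_zero.mpr h

lemma hd_ne' {l : ℂ} (h : l ≠ -(Complex.I / 2)) : l + Complex.I / 2 ≠ 0 := by
  intro hc; exact h (by linear_combination hc)

lemma psi_sub_one {l : ℂ} (h : l ≠ Complex.I / 2) :
    psiM l - 1 = Complex.I / (l - Complex.I / 2) := by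
  rw [psiM, div_sub_one (hd_ne h)]; congr 1; ring

lemma aC_pos {r : ℤ} (h : 0 < r) : aC r = Complex.I := by
  rw [aC, if_neg (by omega), if_neg (by omega)]

lemma aC_neg {r : ℤ} (h : r < 0) : aC r = 0 := if_pos h

lemma aC_zero : aC 0 = Complex.I / 2 := rfl

lemma aC_conj (r : ℤ) : star (aC r) = -aC r := by
  rw [aC]; split_ifs <;> simp [map_div₀, Complex.conj_ofNat, neg_div]

lemma geom_aux {l : ℂ} (h : l ≠ Complex.I / 2) (k : ℕ) :
    (∑ i ∈ range k, psiM l ^ i) * Complex.I = (psiM l ^ k - 1) * (l - Complex.I / 2) := by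
  have hd := hd_ne h
  have hg : (∑ i ∈ range k, psiM l ^ i) * (psiM l - 1) = psiM l ^ k - 1 := geom_sum_mul _ _
  rw [psi_sub_one h] at hg
  rw [← hg]
  have h2 : l * 2 - Complex.I ≠ 0 := by
    intro hc; exact hd (by linear_combination hc / 2)
  field_simp

lemma geom_core {l : ℂ} (h : l ≠ Complex.I / 2) (k : ℕ) :
    (∑ i ∈ range k, (Complex.I * (-(psiM l ^ i) / (l - Complex.I / 2))))
      + (Complex.I / 2 - l) * (-(psiM l ^ k) / (l - Complex.I / 2)) = 1 := by
  have hd := hd_ne h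
  have hSI := geom_aux h k
  have hsum : (∑ i ∈ range k, (Complex.I * (-(psiM l ^ i) / (l - Complex.I / 2))))
      = (-Complex.I / (l - Complex.I / 2)) * ∑ i ∈ range k, psiM l ^ i := by
    rw [Finset.mul_sum]
    exact Finset.sum_congr rfl fun i _ => by ring
  rw [hsum]
  have hre : (-Complex.I / (l - Complex.I / 2)) * (∑ i ∈ range k, psiM l ^ i)
      + (Complex.I / 2 - l) * (-(psiM l ^ k) / (l - Complex.I / 2))
      = ((-Complex.I) * (∑ i ∈ range k, psiM l ^ i) + (Complex.I / 2 - l) * (-(psiM l ^ k)))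
          / (l - Complex.I / 2) := by ring
  rw [hre, div_eq_one_iff_eq hd]
  linear_combination -hSI

/-- sum of the resolvent vector -/
lemma sum_gvv (r : ℕ) {l : ℂ} (h : l ≠ Complex.I / 2) :
    ∑ k : Fin r, gvv r l k = Complex.I * (psiM l ^ r - 1) := by
  have hd := hd_ne h
  have hSI := geom_aux h r
  have : ∑ k : Fin r, gvv r l k = ∑ i ∈ range r, -(psiM l ^ i) / (l - Complex.I / 2) :=
    Fin.sum_univ_eq_sum_range (fun i : ℕ => -(psiM l ^ i) / (l - Complex.I / 2)) r
  rw [this, ← Finset.sum_div, Finset.sum_neg_distrib, neg_div, neg_eq_iff_eq_neg,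
    div_eq_iff hd]
  linear_combination -Complex.I * hSI + (∑ x ∈ range r, psiM l ^ x) * Complex.I_sq

lemma calA2_mulVec_gvv (m : ℕ) {l : ℂ} (h : l ≠ Complex.I / 2) :
    (calA2 m - l • 1) *ᵥ gvv m l = onesV (Fin m) := by
  have hd := hd_ne h
  funext k
  have step : ∀ i : Fin m, ((calA2 m - l • 1) k i) * gvv m l i
      = (fun i : ℕ => (aC ((k : ℕ) - (i : ℤ)) - (if (k : ℕ) = i then l else 0))
          * (-(psiM l ^ i) / (l - Complex.I / 2))) (i : ℕ) := by
    intro i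
    simp only [Matrix.sub_apply, Matrix.smul_apply, one_apply, calA2, of_apply, smul_eq_mul, gvv,
      mul_ite, mul_one, mul_zero, Fin.val_inj]
  have : ((calA2 m - l • 1) *ᵥ gvv m l) k
      = ∑ i ∈ range m, (aC ((k : ℕ) - (i : ℤ)) - (if (k : ℕ) = i then l else 0))
          * (-(psiM l ^ i) / (l - Complex.I / 2)) := by
    rw [mulVec]
    rw [dotProduct]
    rw [Finset.sum_congr rfl (fun i _ => step i)]
    exact Fin.sum_univ_eq_sum_range (fun i : ℕ => (aC ((k : ℕ) - (i : ℤ)) - (if (k : ℕ) = i then l else 0))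
          * (-(psiM l ^ i) / (l - Complex.I / 2))) m
  rw [this]
  have hsub : ∑ i ∈ range m, (aC ((k : ℕ) - (i : ℤ)) - (if (k : ℕ) = i then l else 0))
          * (-(psiM l ^ i) / (l - Complex.I / 2))
      = ∑ i ∈ range ((k : ℕ) + 1), (aC ((k : ℕ) - (i : ℤ)) - (if (k : ℕ) = i then l else 0))
          * (-(psiM l ^ i) / (l - Complex.I / 2)) := by
    refine (Finset.sum_subset ?_ ?_).symm
    · intro i hi
      simp only [mem_range] at hi ⊢
      omega
    · intro i _ hi
      simp only [mem_range, not_lt] at hi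
      rw [aC_neg (by omega), if_neg (by omega)]
      ring
  rw [hsub, Finset.sum_range_succ]
  have hlast : (aC ((k : ℕ) - ((k : ℕ) : ℤ)) - (if (k : ℕ) = (k : ℕ) then l else 0))
      = Complex.I / 2 - l := by
    rw [sub_self, aC_zero, if_pos rfl]
  rw [hlast]
  have hrest : ∀ i ∈ range (k : ℕ), (aC ((k : ℕ) - (i : ℤ)) - (if (k : ℕ) = i then l else 0))
          * (-(psiM l ^ i) / (l - Complex.I / 2))
      = Complex.I * (-(psiM l ^ i) / (l - Complex.I / 2)) := by
    intro i hi
    simp only [mem_range] at hi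
    rw [aC_pos (by omega), if_neg (by omega)]
    ring
  rw [Finset.sum_congr rfl hrest]
  exact geom_core h (k : ℕ)

lemma calA2_det_isUnit (m : ℕ) {l : ℂ} (h : l ≠ Complex.I / 2) :
    IsUnit (calA2 m - l • 1).det := by
  have htri : (calA2 m - l • (1 : Matrix (Fin m) (Fin m) ℂ)).BlockTriangular OrderDual.toDual := by
    intro i j hij
    have hij' : (i : ℕ) < (j : ℕ) := hij
    simp only [Matrix.sub_apply, Matrix.smul_apply, one_apply, calA2, of_apply]
    rw [aC_neg (by omega), if_neg (by omega)]
    simp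
  rw [Matrix.det_of_lowerTriangular _ htri]
  have hdiag : ∀ i : Fin m, (calA2 m - l • (1 : Matrix (Fin m) (Fin m) ℂ)) i i
      = Complex.I / 2 - l := by
    intro i
    simp [Matrix.sub_apply, Matrix.smul_apply, one_apply, calA2, of_apply, sub_self, aC_zero]
  rw [Finset.prod_congr rfl (fun i _ => hdiag i), Finset.prod_const]
  exact (isUnit_iff_ne_zero.mpr (fun hc => hd_ne h (by linear_combination -hc))).pow _

lemma calA2_inv_mulVec (m : ℕ) {l : ℂ} (h : l ≠ Complex.I / 2) :
    (calA2 m - l • 1)⁻¹ *ᵥ onesV (Fin m) = gvv m l := by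
  rw [← calA2_mulVec_gvv m h, mulVec_mulVec, Matrix.nonsing_inv_mul _ (calA2_det_isUnit m h),
    one_mulVec]

lemma calA2_conjT (m : ℕ) (u : ℂ) :
    (calA2 m)ᴴ - u • 1 = -((calA2 m - (-u) • 1)ᵀ) := by
  ext j l
  simp only [conjTranspose_apply, Matrix.sub_apply, Matrix.smul_apply, one_apply, transpose_apply,
    calA2, of_apply, Matrix.neg_apply, neg_sub]
  rw [aC_conj]
  simp only [smul_eq_mul]
  split_ifs with h1 h2 h2
  · ring
  · exact absurd h1.symm h2
  · exact absurd h2.symm h1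
  · ring

lemma neg_transpose_inv {k : Type*} [Fintype k] [DecidableEq k]
    (B : Matrix k k ℂ) (hB : IsUnit B.det) : (-(Bᵀ))⁻¹ = -((B⁻¹)ᵀ) := by
  apply Matrix.inv_eq_right_inv
  rw [Matrix.neg_mul, Matrix.mul_neg, neg_neg, ← Matrix.transpose_mul,
    Matrix.nonsing_inv_mul _ hB, Matrix.transpose_one]

lemma calA2H_vecMul (m : ℕ) {u : ℂ} (hu' : u ≠ -(Complex.I / 2)) :
    onesV (Fin m) ᵥ* ((calA2 m)ᴴ - u • 1)⁻¹ = -(gvv m (-u)) := by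
  have hne : (-u) ≠ Complex.I / 2 := fun hc => hu' (by linear_combination -hc)
  rw [calA2_conjT m u, neg_transpose_inv _ (calA2_det_isUnit m hne)]
  rw [Matrix.vecMul_neg, Matrix.vecMul_transpose, calA2_inv_mulVec m hne]

lemma psiM_neg {l : ℂ} (h : l ≠ Complex.I / 2) (h' : l ≠ -(Complex.I / 2)) :
    psiM (-l) = (l - Complex.I / 2) / (l + Complex.I / 2) := by
  rw [psiM, div_eq_div_iff (by intro hc; exact h' (by linear_combination -hc)) (hd_ne' h')]
  ring

lemma phi_ne_zero {l : ℂ} (h : l ≠ Complex.I / 2) (h' : l ≠ -(Complex.I / 2)) :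
    (l - Complex.I / 2) / (l + Complex.I / 2) ≠ 0 :=
  div_ne_zero (hd_ne h) (hd_ne' h')

lemma psiM_eq_inv_phi {l : ℂ} : psiM l = ((l - Complex.I / 2) / (l + Complex.I / 2))⁻¹ := by
  rw [psiM, inv_div]

/-- key flip relation for the resolvent vector -/
lemma gvv_neg (r : ℕ) {l : ℂ} (h : l ≠ Complex.I / 2) (h' : l ≠ -(Complex.I / 2)) (k : Fin r) :
    gvv r (-l) k = -(((l - Complex.I / 2) / (l + Complex.I / 2)) ^ r * gvv r l k.rev) := by
  obtain ⟨φ, hφ⟩ : ∃ φ : ℂ, φ = (l - Complex.I / 2) / (l + Complex.I / 2) := ⟨_, rfl⟩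
  rw [← hφ]
  have h1 : l + Complex.I / 2 ≠ 0 := hd_ne' h'
  have h2 : l - Complex.I / 2 ≠ 0 := hd_ne h
  have h2' : l * 2 - Complex.I ≠ 0 := fun hc => hd_ne h (by linear_combination hc / 2)
  have h1' : l * 2 + Complex.I ≠ 0 := fun hc => hd_ne' h' (by linear_combination hc / 2)
  have hψ : psiM l * φ = 1 := by rw [hφ, psiM]; field_simp
  have hk := k.isLt
  have hrev : (k.rev : ℕ) = r - ((k : ℕ) + 1) := Fin.val_rev k
  have hLHS : gvv r (-l) k = φ ^ (k : ℕ) / (l + Complex.I / 2) := by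
    rw [gvv, psiM_neg h h', ← hφ,
      div_eq_div_iff (by intro hc; exact h' (by linear_combination -hc)) h1]
    ring
  have hψpow : psiM l ^ (r - ((k : ℕ) + 1)) * φ ^ (r - ((k : ℕ) + 1)) = 1 := by
    rw [← mul_pow, hψ, one_pow]
  have hsplit : φ ^ r = φ ^ (r - ((k : ℕ) + 1)) * (φ ^ (k : ℕ) * φ) := by
    rw [← pow_succ, ← pow_add]; congr 1; omega
  rw [hLHS, gvv, hrev, hsplit]
  have hstep : -(φ ^ (r - ((k : ℕ) + 1)) * (φ ^ (k : ℕ) * φ)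
        * (-(psiM l ^ (r - ((k : ℕ) + 1))) / (l - Complex.I / 2)))
      = (psiM l ^ (r - ((k : ℕ) + 1)) * φ ^ (r - ((k : ℕ) + 1)))
          * (φ ^ (k : ℕ) * (φ / (l - Complex.I / 2))) := by ring
  rw [hstep, hψpow, one_mul]
  have hlast : φ / (l - Complex.I / 2) = 1 / (l + Complex.I / 2) := by
    rw [hφ]
    field_simp
  rw [hlast]
  ring

lemma flipU_apply (r : ℕ) (k q : Fin r) :
    flipU r k q = if q = k.rev then 1 else 0 := by
  rw [flipU, of_apply]
  congr 1
  have hk := k.isLt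
  have hq := q.isLt
  have hrev : (k.rev : ℕ) = r - ((k : ℕ) + 1) := Fin.val_rev k
  rw [eq_iff_iff, Fin.ext_iff, hrev]
  constructor <;> intro h <;> omega

lemma flipU_apply' (r : ℕ) (k q : Fin r) :
    flipU r k q = if k = q.rev then 1 else 0 := by
  rw [flipU_apply]
  congr 1
  rw [eq_iff_iff]
  constructor <;> intro h <;> subst h <;> simp [Fin.rev_rev]

lemma flipU_mul {α : Type*} [Fintype α] (r : ℕ) (M : Matrix (Fin r) α ℂ) :
    flipU r * M = Matrix.of fun k a => M k.rev a := by
  ext k a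
  rw [mul_apply, of_apply]
  rw [Finset.sum_congr rfl (fun q _ => by rw [flipU_apply r k q])]
  simp [ite_mul]

lemma mul_flipU {α : Type*} [Fintype α] (r : ℕ) (M : Matrix α (Fin r) ℂ) :
    M * flipU r = Matrix.of fun a k => M a k.rev := by
  ext a k
  rw [mul_apply, of_apply]
  rw [Finset.sum_congr rfl (fun q _ => by rw [flipU_apply' r q k])]
  simp [mul_ite]

lemma UmnM_cond {m n : ℕ} (p q : Fin n) (j l : Fin m) :
    (m * (p : ℕ) + (j : ℕ) + (m * (q : ℕ) + (l : ℕ)) + 1 = m * n)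
      ↔ (q = p.rev ∧ l = j.rev) := by
  have hm : 0 < m := j.pos
  have hp := p.isLt
  have hq := q.isLt
  have hj := j.isLt
  have hl := l.isLt
  constructor
  · intro hEq
    have key : m * ((p : ℕ) + (q : ℕ)) + ((j : ℕ) + (l : ℕ) + 1) = m * n := by
      rw [Nat.mul_add]; linarith
    have hs : (p : ℕ) + (q : ℕ) < n := by
      by_contra hc
      push_neg at hc
      have : m * n ≤ m * ((p : ℕ) + (q : ℕ)) := Nat.mul_le_mul_left m hc
      linarith
    have hrw : m * (n - ((p : ℕ) + (q : ℕ))) + m * ((p : ℕ) + (q : ℕ)) = m * n := by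
      rw [← Nat.mul_add, Nat.sub_add_cancel (le_of_lt hs)]
    have h2 : (j : ℕ) + (l : ℕ) + 1 = m * (n - ((p : ℕ) + (q : ℕ))) := by linarith
    have hd1 : 1 ≤ n - ((p : ℕ) + (q : ℕ)) := by omega
    have hd2 : n - ((p : ℕ) + (q : ℕ)) < 2 := by
      by_contra hc
      push_neg at hc
      have : m * 2 ≤ m * (n - ((p : ℕ) + (q : ℕ))) := Nat.mul_le_mul_left m hc
      omega
    have hd : n - ((p : ℕ) + (q : ℕ)) = 1 := by omega
    rw [hd, Nat.mul_one] at h2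
    constructor
    · rw [Fin.ext_iff, Fin.val_rev]; omega
    · rw [Fin.ext_iff, Fin.val_rev]; omega
  · rintro ⟨hq', hl'⟩
    subst hq'; subst hl'
    have hrev1 : (p.rev : ℕ) = n - ((p : ℕ) + 1) := Fin.val_rev p
    have hrev2 : (j.rev : ℕ) = m - ((j : ℕ) + 1) := Fin.val_rev j
    rw [hrev1, hrev2]
    have h1 : m * (p : ℕ) + m * (n - ((p : ℕ) + 1)) = m * (n - 1) := by
      rw [← Nat.mul_add]
      congr 1
      omega
    have h2 : m * (n - 1) + m = m * n := by
      rw [← Nat.mul_succ]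
      congr 1
      omega
    omega

lemma UmnM_apply {m n : ℕ} (r c : Fin n × Fin m) :
    UmnM m n r c = if c = (r.1.rev, r.2.rev) then 1 else 0 := by
  rw [UmnM, of_apply]
  congr 1
  rw [show (c = (r.1.rev, r.2.rev)) ↔ (c.1 = r.1.rev ∧ c.2 = r.2.rev) from Prod.ext_iff]
  exact propext (UmnM_cond r.1 c.1 r.2 c.2)

lemma UmnM_apply' {m n : ℕ} (r c : Fin n × Fin m) :
    UmnM m n r c = if r = (c.1.rev, c.2.rev) then 1 else 0 := by
  rw [UmnM_apply]
  congr 1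
  rw [eq_iff_iff, Prod.ext_iff, Prod.ext_iff]
  constructor <;> rintro ⟨h1, h2⟩ <;> simp only at h1 h2 <;>
    exact ⟨by rw [h1, Fin.rev_rev], by rw [h2, Fin.rev_rev]⟩

lemma UmnM_mul {m n : ℕ} {α : Type*} [Fintype α] (M : Matrix (Fin n × Fin m) α ℂ) :
    UmnM m n * M = Matrix.of fun r a => M (r.1.rev, r.2.rev) a := by
  ext r a
  rw [mul_apply, of_apply]
  rw [Finset.sum_congr rfl (fun c _ => by rw [UmnM_apply r c])]
  simp [ite_mul]

lemma mul_UmnM {m n : ℕ} {α : Type*} [Fintype α] (M : Matrix α (Fin n × Fin m) ℂ) :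
    M * UmnM m n = Matrix.of fun a c => M a (c.1.rev, c.2.rev) := by
  ext a c
  rw [mul_apply, of_apply]
  rw [Finset.sum_congr rfl (fun r _ => by rw [UmnM_apply' r c])]
  simp [mul_ite]

lemma UmnM_mulVec {m n : ℕ} (v : Fin n × Fin m → ℂ) :
    UmnM m n *ᵥ v = fun r => v (r.1.rev, r.2.rev) := by
  funext r
  rw [mulVec, dotProduct]
  rw [Finset.sum_congr rfl (fun c _ => by rw [UmnM_apply r c])]
  simp [ite_mul]

lemma UmnM_symm {m n : ℕ} : (UmnM m n)ᵀ = UmnM m n := by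
  ext r c
  rw [transpose_apply, UmnM_apply', UmnM_apply]

lemma sum_shift (f : ℤ → ℂ) (N k : ℕ) (hk : k < N) :
    ∑ q ∈ range N, f ((q : ℤ) - (k : ℤ))
      = (f 0 + ∑ s ∈ range k, f (-((s : ℤ) + 1))) + ∑ s ∈ range (N - (k + 1)), f ((s : ℤ) + 1) := by
  have hsplit : ∑ q ∈ range N, f ((q : ℤ) - (k : ℤ))
      = (∑ q ∈ range (k+1), f ((q : ℤ) - (k : ℤ)))
        + ∑ q ∈ Finset.Ico (k+1) N, f ((q : ℤ) - (k : ℤ)) := by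
    rw [range_eq_Ico, range_eq_Ico]
    exact (Finset.sum_Ico_consecutive (fun q : ℕ => f ((q : ℤ) - (k : ℤ))) (m := 0) (n := k+1) (k := N) (by omega) (by omega)).symm
  rw [hsplit]
  congr 1
  · -- first part
    have hrefl : ∑ q ∈ range (k+1), f ((((k+1) - 1 - q : ℕ) : ℤ) - (k : ℤ))
        = ∑ q ∈ range (k+1), f ((q : ℤ) - (k : ℤ)) :=
      Finset.sum_range_reflect (fun q => f ((q : ℤ) - (k : ℤ))) (k+1)
    rw [← hrefl]
    have hcg : ∀ q ∈ range (k+1), f ((((k+1) - 1 - q : ℕ) : ℤ) - (k : ℤ)) = f (-((q : ℕ) : ℤ)) := by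
      intro q hq
      simp only [mem_range] at hq
      congr 1 <;> omega
    rw [Finset.sum_congr rfl hcg, Finset.sum_range_succ']
    have hcg2 : ∀ s ∈ range k, f (-(((s + 1 : ℕ) : ℤ))) = f (-((s : ℤ) + 1)) := by
      intro s _
      congr 1 <;> omega
    rw [Finset.sum_congr rfl hcg2]
    simp [add_comm]
  · -- second part
    rw [Finset.sum_Ico_eq_sum_range]
    apply Finset.sum_congr rfl
    intro s _
    congr 1 <;> omega

lemma UmnM_TBT (m n : ℕ) (t : ℤ → ℤ → ℂ) :
    UmnM m n * TBT m n t = (TBT m n t)ᵀ * UmnM m n := by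
  rw [UmnM_mul, mul_UmnM]
  ext r c
  simp only [of_apply, transpose_apply, TBT]
  have e1 : (((r.1.rev : ℕ) : ℤ) - ((c.1 : ℕ) : ℤ)) = (((c.1.rev : ℕ) : ℤ) - ((r.1 : ℕ) : ℤ)) := by
    rw [Fin.val_rev, Fin.val_rev]
    have := r.1.isLt; have := c.1.isLt
    omega
  have e2 : (((r.2.rev : ℕ) : ℤ) - ((c.2 : ℕ) : ℤ)) = (((c.2.rev : ℕ) : ℤ) - ((r.2 : ℕ) : ℤ)) := by
    rw [Fin.val_rev, Fin.val_rev]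
    have := r.2.isLt; have := c.2.isLt
    omega
  rw [e1, e2]

lemma UmnM_inv_TBT (m n : ℕ) (t : ℤ → ℤ → ℂ) (hT : IsUnit (TBT m n t)) :
    UmnM m n * (TBT m n t)⁻¹ = ((TBT m n t)⁻¹)ᵀ * UmnM m n := by
  have hdet := (Matrix.isUnit_iff_isUnit_det _).mp hT
  have h1 : TBT m n t * (TBT m n t)⁻¹ = 1 := Matrix.mul_nonsing_inv _ hdet
  have h3 : ((TBT m n t)⁻¹)ᵀ * (TBT m n t)ᵀ = 1 := by
    rw [← Matrix.transpose_mul, h1, Matrix.transpose_one]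
  calc UmnM m n * (TBT m n t)⁻¹
      = (((TBT m n t)⁻¹)ᵀ * (TBT m n t)ᵀ) * (UmnM m n * (TBT m n t)⁻¹) := by
        rw [h3, Matrix.one_mul]
    _ = ((TBT m n t)⁻¹)ᵀ * (((TBT m n t)ᵀ * UmnM m n) * (TBT m n t)⁻¹) := by
        rw [Matrix.mul_assoc, Matrix.mul_assoc]
    _ = ((TBT m n t)⁻¹)ᵀ * ((UmnM m n * TBT m n t) * (TBT m n t)⁻¹) := by
        rw [← UmnM_TBT]
    _ = ((TBT m n t)⁻¹)ᵀ * (UmnM m n * (TBT m n t * (TBT m n t)⁻¹)) := by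
        rw [Matrix.mul_assoc]
    _ = ((TBT m n t)⁻¹)ᵀ * UmnM m n := by
        rw [h1, Matrix.mul_one]

lemma sum_collapse_snd {n m : ℕ} (F : Fin n × Fin m → ℂ) (b : Fin m) :
    ∑ x : Fin n × Fin m, F x * (if x.2 = b then 1 else 0) = ∑ q : Fin n, F (q, b) := by
  rw [Fintype.sum_prod_type]
  apply Finset.sum_congr rfl
  intro q _
  simp [mul_ite]

lemma sum_collapse_fst {n m : ℕ} (F : Fin n × Fin m → ℂ) (b : Fin n) :
    ∑ x : Fin n × Fin m, F x * (if b = x.1 then 1 else 0) = ∑ l : Fin m, F (b, l) := by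
  rw [Fintype.sum_prod_type]
  have inner : ∀ q : Fin n, ∑ l : Fin m, F (q, l) * (if b = q then 1 else 0)
      = if b = q then (∑ l : Fin m, F (q, l)) else 0 := by
    intro q
    split_ifs with h
    · simp
    · simp
  rw [Finset.sum_congr rfl (fun q _ => inner q)]
  simp [Finset.sum_ite_eq]

lemma struct_a (m n : ℕ) :
    UmnM m n * M31 m n = (M21 m n)ᵀ * flipU m := by
  rw [UmnM_mul, mul_flipU]
  ext r l
  simp only [of_apply, M31, M21, conjTranspose_apply, transpose_apply]
  by_cases h : l = r.2.rev
  · rw [if_pos h, if_pos (by rw [h, Fin.rev_rev]), star_one]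
  · rw [if_neg h, if_neg (by intro hc; exact h (by rw [← hc, Fin.rev_rev])), star_zero]

lemma struct_c (m n : ℕ) :
    UmnM m n * M32 m n = (M22 m n)ᵀ * flipU n := by
  rw [UmnM_mul, mul_flipU]
  ext r q
  simp only [of_apply, M32, M22, conjTranspose_apply, transpose_apply]
  by_cases h : q = r.1.rev
  · rw [if_pos h, if_pos (by rw [h, Fin.rev_rev]), star_one]
  · rw [if_neg h, if_neg (by intro hc; exact h (by rw [← hc, Fin.rev_rev])), star_zero]

lemma struct_b (m n : ℕ) (t : ℤ → ℤ → ℂ) :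
    UmnM m n * M11 m n t
      = -((M41 m n t)ᵀ * flipU m) + (TBT m n t)ᵀ * EcolId m n * flipU m := by
  rw [UmnM_mul, Matrix.mul_assoc ((TBT m n t)ᵀ), mul_flipU, mul_flipU]
  ext r l
  obtain ⟨p, j⟩ := r
  simp only [of_apply, Matrix.add_apply, Matrix.neg_apply, transpose_apply, M11, M41]
  -- compute the (Tᵀ * E) entry
  have hTE : ((TBT m n t)ᵀ * Matrix.of (fun (a : Fin n × Fin m) (k : Fin m) => EcolId m n a k.rev)) (p, j) l
      = ∑ q ∈ range n, t ((q : ℤ) - (p : ℤ)) (((l.rev : ℕ) : ℤ) - ((j : ℕ) : ℤ)) := by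
    rw [mul_apply]
    have hsummand : ∀ x : Fin n × Fin m, (TBT m n t)ᵀ (p, j) x * (Matrix.of (fun (a : Fin n × Fin m) (k : Fin m) => EcolId m n a k.rev)) x l
        = (fun x : Fin n × Fin m => t (((x.1 : ℕ) : ℤ) - ((p : ℕ) : ℤ))
            (((x.2 : ℕ) : ℤ) - ((j : ℕ) : ℤ))) x * (if x.2 = l.rev then 1 else 0) := by
      intro x
      simp [TBT, EcolId, transpose_apply]
    rw [Finset.sum_congr rfl (fun x _ => hsummand x), sum_collapse_snd]
    exact Fin.sum_univ_eq_sum_range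
      (fun q : ℕ => t ((q : ℤ) - (p : ℤ)) (((l.rev : ℕ) : ℤ) - ((j : ℕ) : ℤ))) n
  rw [hTE, sum_shift (fun z => t z (((l.rev : ℕ) : ℤ) - ((j : ℕ) : ℤ))) n (p : ℕ) p.isLt]
  have harg : (((j.rev : ℕ) : ℤ) - ((l : ℕ) : ℤ)) = (((l.rev : ℕ) : ℤ) - ((j : ℕ) : ℤ)) := by
    rw [Fin.val_rev, Fin.val_rev]
    have := j.isLt; have := l.isLt
    omega
  rw [harg]
  rw [show ((p.rev : Fin n) : ℕ) = n - ((p : ℕ) + 1) from Fin.val_rev p]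
  ring

lemma struct_d (m n : ℕ) (t : ℤ → ℤ → ℂ) :
    UmnM m n * M12 m n t
      = -((M42 m n t)ᵀ * flipU n) + (TBT m n t)ᵀ * M32 m n * flipU n := by
  rw [UmnM_mul, Matrix.mul_assoc ((TBT m n t)ᵀ), mul_flipU, mul_flipU]
  ext r q
  obtain ⟨p, j⟩ := r
  simp only [of_apply, Matrix.add_apply, Matrix.neg_apply, transpose_apply, M12, M42, m12e, m42e]
  have hTM : ((TBT m n t)ᵀ * Matrix.of (fun (a : Fin n × Fin m) (k : Fin n) => M32 m n a k.rev)) (p, j) q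
      = ∑ l ∈ range m, t (((q.rev : ℕ) : ℤ) - ((p : ℕ) : ℤ)) ((l : ℤ) - ((j : ℕ) : ℤ)) := by
    rw [mul_apply]
    have hsummand : ∀ x : Fin n × Fin m, (TBT m n t)ᵀ (p, j) x * (Matrix.of (fun (a : Fin n × Fin m) (k : Fin n) => M32 m n a k.rev)) x q
        = (fun x : Fin n × Fin m => t (((x.1 : ℕ) : ℤ) - ((p : ℕ) : ℤ))
            (((x.2 : ℕ) : ℤ) - ((j : ℕ) : ℤ))) x * (if q.rev = x.1 then 1 else 0) := by
      intro x
      simp only [TBT, M32, M22, conjTranspose_apply, transpose_apply, of_apply]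
      congr 1
      split_ifs <;> simp
    rw [Finset.sum_congr rfl (fun x _ => hsummand x), sum_collapse_fst]
    exact Fin.sum_univ_eq_sum_range
      (fun l : ℕ => t (((q.rev : ℕ) : ℤ) - ((p : ℕ) : ℤ)) ((l : ℤ) - ((j : ℕ) : ℤ))) m
  rw [hTM, sum_shift (fun z => t (((q.rev : ℕ) : ℤ) - ((p : ℕ) : ℤ)) z) m (j : ℕ) j.isLt]
  have harg : (((p.rev : ℕ) : ℤ) - ((q : ℕ) : ℤ)) = (((q.rev : ℕ) : ℤ) - ((p : ℕ) : ℤ)) := by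
    rw [Fin.val_rev, Fin.val_rev]
    have := p.isLt; have := q.isLt
    omega
  rw [harg]
  rw [show ((j.rev : Fin m) : ℕ) = m - ((j : ℕ) + 1) from Fin.val_rev j]
  ring

lemma calA1_eq (n : ℕ) : calA1 n = calA2 n := rfl

lemma A1_sub_kron (m n : ℕ) (u : ℂ) :
    A1 m n - u • 1 = (calA2 n - u • 1) ⊗ₖ (1 : Matrix (Fin m) (Fin m) ℂ) := by
  ext r c
  obtain ⟨p, j⟩ := r; obtain ⟨q, l⟩ := c
  by_cases hj : j = l <;> by_cases hp : p = q <;>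
    simp [A1, calA2, kroneckerMap_apply, one_apply, Prod.ext_iff, hj, hp] <;> ring

lemma A2_sub_kron (m n : ℕ) (u : ℂ) :
    A2 m n - u • 1 = (1 : Matrix (Fin n) (Fin n) ℂ) ⊗ₖ (calA2 m - u • 1) := by
  ext r c
  obtain ⟨p, j⟩ := r; obtain ⟨q, l⟩ := c
  by_cases hj : j = l <;> by_cases hp : p = q <;>
    simp [A2, calA2, kroneckerMap_apply, one_apply, Prod.ext_iff, hj, hp] <;> ring

lemma A1_det_isUnit (m n : ℕ) {u : ℂ} (hu : u ≠ Complex.I / 2) :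
    IsUnit (A1 m n - u • 1).det := by
  rw [A1_sub_kron, Matrix.det_kronecker]
  exact ((calA2_det_isUnit n hu).pow _).mul (by rw [Matrix.det_one, one_pow]; exact isUnit_one)

lemma A2_det_isUnit (m n : ℕ) {u : ℂ} (hu : u ≠ Complex.I / 2) :
    IsUnit (A2 m n - u • 1).det := by
  rw [A2_sub_kron, Matrix.det_kronecker]
  exact (by rw [Matrix.det_one, one_pow]; exact isUnit_one : IsUnit ((1 : Matrix (Fin n) (Fin n) ℂ).det ^ Fintype.card (Fin m))).mul ((calA2_det_isUnit m hu).pow _)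

lemma bigV_step1 (m n : ℕ) {u1 : ℂ} (hu1 : u1 ≠ Complex.I / 2) :
    (A1 m n - u1 • 1) *ᵥ (fun r : Fin n × Fin m => gvv n u1 r.1) = onesV (Fin n × Fin m) := by
  funext r
  obtain ⟨p, j⟩ := r
  rw [mulVec, dotProduct, Fintype.sum_prod_type]
  have hentry : ∀ (q : Fin n) (l : Fin m),
      (A1 m n - u1 • 1) (p, j) (q, l) * gvv n u1 q
      = (if j = l then 1 else 0) * ((calA2 n - u1 • 1) p q * gvv n u1 q) := by
    intro q l
    by_cases hj : j = l <;> by_cases hp : p = q <;>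
      simp [A1, calA2, one_apply, Prod.ext_iff, hj, hp] <;> ring
  rw [Finset.sum_congr rfl (fun q _ => Finset.sum_congr rfl (fun l _ => hentry q l))]
  have hinner : ∀ q : Fin n, ∑ l : Fin m, (if j = l then 1 else 0)
        * ((calA2 n - u1 • 1) p q * gvv n u1 q)
      = (calA2 n - u1 • 1) p q * gvv n u1 q := by
    intro q
    rw [← Finset.sum_mul]
    simp
  rw [Finset.sum_congr rfl (fun q _ => hinner q)]
  have := congrFun (calA2_mulVec_gvv n hu1) p
  rw [mulVec, dotProduct] at this
  rw [this]
  rfl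

lemma bigV_step2 (m n : ℕ) (u1 : ℂ) {u2 : ℂ} (hu2 : u2 ≠ Complex.I / 2) :
    (A2 m n - u2 • 1) *ᵥ (fun r : Fin n × Fin m => gvv n u1 r.1 * gvv m u2 r.2)
      = fun r : Fin n × Fin m => gvv n u1 r.1 := by
  funext r
  obtain ⟨p, j⟩ := r
  rw [mulVec, dotProduct, Fintype.sum_prod_type]
  have hentry : ∀ (q : Fin n) (l : Fin m),
      (A2 m n - u2 • 1) (p, j) (q, l) * (gvv n u1 q * gvv m u2 l)
      = (if p = q then 1 else 0) * (gvv n u1 q * ((calA2 m - u2 • 1) j l * gvv m u2 l)) := by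
    intro q l
    by_cases hj : j = l <;> by_cases hp : p = q <;>
      simp [A2, calA2, one_apply, Prod.ext_iff, hj, hp] <;> ring
  rw [Finset.sum_congr rfl (fun q _ => Finset.sum_congr rfl (fun l _ => hentry q l))]
  have hinner : ∀ q : Fin n, ∑ l : Fin m, (if p = q then 1 else 0)
        * (gvv n u1 q * ((calA2 m - u2 • 1) j l * gvv m u2 l))
      = (if p = q then 1 else 0) * (gvv n u1 q * 1) := by
    intro q
    rw [← Finset.mul_sum, ← Finset.mul_sum]
    have := congrFun (calA2_mulVec_gvv m hu2) j
    rw [mulVec, dotProduct] at this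
    rw [this]
    rfl
  rw [Finset.sum_congr rfl (fun q _ => hinner q)]
  simp

lemma bigResolvent (m n : ℕ) {u1 u2 : ℂ} (hu1 : u1 ≠ Complex.I / 2) (hu2 : u2 ≠ Complex.I / 2) :
    ((A2 m n - u2 • 1)⁻¹ * (A1 m n - u1 • 1)⁻¹) *ᵥ onesV (Fin n × Fin m)
      = fun r : Fin n × Fin m => gvv n u1 r.1 * gvv m u2 r.2 := by
  have h1 : (A1 m n - u1 • 1)⁻¹ *ᵥ onesV (Fin n × Fin m)
      = fun r : Fin n × Fin m => gvv n u1 r.1 := by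
    rw [← bigV_step1 m n hu1, Matrix.mulVec_mulVec,
      Matrix.nonsing_inv_mul _ (A1_det_isUnit m n hu1), Matrix.one_mulVec]
  have h2 : (A2 m n - u2 • 1)⁻¹ *ᵥ (fun r : Fin n × Fin m => gvv n u1 r.1)
      = fun r : Fin n × Fin m => gvv n u1 r.1 * gvv m u2 r.2 := by
    rw [← bigV_step2 m n u1 hu2, Matrix.mulVec_mulVec,
      Matrix.nonsing_inv_mul _ (A2_det_isUnit m n hu2), Matrix.one_mulVec]
  rw [← Matrix.mulVec_mulVec, h1, h2]

lemma A1H_eq (m n : ℕ) (u : ℂ) :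
    (A1 m n)ᴴ - u • 1 = -((A1 m n - (-u) • 1)ᵀ) := by
  ext r c
  simp only [conjTranspose_apply, Matrix.sub_apply, Matrix.smul_apply, one_apply, transpose_apply,
    A1, of_apply, Matrix.neg_apply, neg_sub, smul_eq_mul]
  by_cases hj : c.2 = r.2 <;> by_cases he : r = c
  · rw [if_pos hj, if_pos (show c = r from he.symm), if_pos he, aC_conj]; ring
  · rw [if_pos hj, if_neg (show ¬ c = r from fun hc => he hc.symm), if_neg he, aC_conj]; ring
  · exact absurd (congrArg Prod.snd he).symm hj
  · rw [if_neg hj, if_neg (fun hc : c = r => he hc.symm), if_neg he]; simp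

lemma A2H_eq (m n : ℕ) (u : ℂ) :
    (A2 m n)ᴴ - u • 1 = -((A2 m n - (-u) • 1)ᵀ) := by
  ext r c
  simp only [conjTranspose_apply, Matrix.sub_apply, Matrix.smul_apply, one_apply, transpose_apply,
    A2, of_apply, Matrix.neg_apply, neg_sub, smul_eq_mul]
  by_cases hj : c.1 = r.1 <;> by_cases he : r = c
  · rw [if_pos hj, if_pos (show c = r from he.symm), if_pos he, aC_conj]; ring
  · rw [if_pos hj, if_neg (show ¬ c = r from fun hc => he hc.symm), if_neg he, aC_conj]; ring
  · exact absurd (congrArg Prod.fst he).symm hj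
  · rw [if_neg hj, if_neg (fun hc : c = r => he hc.symm), if_neg he]; simp

lemma neg_ne_half {u : ℂ} (hu' : u ≠ -(Complex.I / 2)) : -u ≠ Complex.I / 2 :=
  fun hc => hu' (by linear_combination -hc)

lemma rowW (m n : ℕ) {u1 u2 : ℂ} (hu1' : u1 ≠ -(Complex.I / 2)) (hu2' : u2 ≠ -(Complex.I / 2)) :
    onesV (Fin n × Fin m) ᵥ* (((A1 m n)ᴴ - u1 • 1)⁻¹ * ((A2 m n)ᴴ - u2 • 1)⁻¹)
      = fun r : Fin n × Fin m => gvv n (-u1) r.1 * gvv m (-u2) r.2 := by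
  have h1 := neg_ne_half hu1'
  have h2 := neg_ne_half hu2'
  rw [A1H_eq, A2H_eq, neg_transpose_inv _ (A1_det_isUnit m n h1),
    neg_transpose_inv _ (A2_det_isUnit m n h2)]
  rw [Matrix.neg_mul, Matrix.mul_neg, neg_neg, ← Matrix.transpose_mul,
    Matrix.vecMul_transpose]
  exact bigResolvent m n h1 h2

lemma W_flip (m n : ℕ) {u1 u2 : ℂ}
    (hu1 : u1 ≠ Complex.I / 2) (hu1' : u1 ≠ -(Complex.I / 2))
    (hu2 : u2 ≠ Complex.I / 2) (hu2' : u2 ≠ -(Complex.I / 2)) :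
    (fun r : Fin n × Fin m => gvv n (-u1) r.1 * gvv m (-u2) r.2)
      = (((u1 - Complex.I / 2) / (u1 + Complex.I / 2)) ^ n *
          ((u2 - Complex.I / 2) / (u2 + Complex.I / 2)) ^ m)
        • (UmnM m n *ᵥ (fun r : Fin n × Fin m => gvv n u1 r.1 * gvv m u2 r.2)) := by
  rw [UmnM_mulVec]
  funext r
  rw [gvv_neg n hu1 hu1' r.1, gvv_neg m hu2 hu2' r.2]
  simp only [Pi.smul_apply, smul_eq_mul]
  ring

lemma fromCols_add {m n1 n2 : Type*} (A C : Matrix m n1 ℂ) (B D : Matrix m n2 ℂ) :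
    fromCols A B + fromCols C D = fromCols (A + C) (B + D) := by
  ext i j
  cases j <;> simp [fromCols]

lemma JU (k : ℕ) : J2 k * U2 k = fromBlocks 0 (flipU k) (-(flipU k)) 0 := by
  rw [J2, U2, Matrix.fromBlocks_multiply]
  simp

lemma E1lem (m n : ℕ) (t : ℤ → ℤ → ℂ) (hT : IsUnit (TBT m n t)) :
    UmnM m n * Gam1 m n t
      = (GamHat1 m n t)ᵀ * (J2 m * U2 m) + fromCols (EcolId m n * flipU m) 0 := by
  have hdet := (Matrix.isUnit_iff_isUnit_det _).mp hT
  have h1 : TBT m n t * (TBT m n t)⁻¹ = 1 := Matrix.mul_nonsing_inv _ hdet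
  have hRT : ((TBT m n t)⁻¹)ᵀ * (TBT m n t)ᵀ = 1 := by
    rw [← Matrix.transpose_mul, h1, Matrix.transpose_one]
  rw [Gam1, ← Matrix.mul_assoc, UmnM_inv_TBT m n t hT, Matrix.mul_assoc]
  rw [Pi1, Matrix.mul_fromCols, struct_a, struct_b]
  rw [GamHat1, PiHat1, Matrix.fromRows_mul, Matrix.transpose_fromRows, JU,
    Matrix.fromCols_mul_fromBlocks, Matrix.mul_fromCols, fromCols_add]
  simp only [Matrix.mul_zero, add_zero, zero_add, Matrix.mul_add, Matrix.mul_neg,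
    Matrix.neg_mul, Matrix.transpose_mul, Matrix.mul_assoc]
  rw [← Matrix.mul_assoc (((TBT m n t)⁻¹)ᵀ) ((TBT m n t)ᵀ) (EcolId m n * flipU m), hRT,
    Matrix.one_mul]

lemma E2lem (m n : ℕ) (t : ℤ → ℤ → ℂ) (hT : IsUnit (TBT m n t)) :
    UmnM m n * Gam2 m n t
      = (GamHat2 m n t)ᵀ * (J2 n * U2 n) + fromCols (M32 m n * flipU n) 0 := by
  have hdet := (Matrix.isUnit_iff_isUnit_det _).mp hT
  have h1 : TBT m n t * (TBT m n t)⁻¹ = 1 := Matrix.mul_nonsing_inv _ hdet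
  have hRT : ((TBT m n t)⁻¹)ᵀ * (TBT m n t)ᵀ = 1 := by
    rw [← Matrix.transpose_mul, h1, Matrix.transpose_one]
  rw [Gam2, ← Matrix.mul_assoc, UmnM_inv_TBT m n t hT, Matrix.mul_assoc]
  rw [Pi2, Matrix.mul_fromCols, struct_c, struct_d]
  rw [GamHat2, PiHat2, Matrix.fromRows_mul, Matrix.transpose_fromRows, JU,
    Matrix.fromCols_mul_fromBlocks, Matrix.mul_fromCols, fromCols_add]
  simp only [Matrix.mul_zero, add_zero, zero_add, Matrix.mul_add, Matrix.mul_neg,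
    Matrix.neg_mul, Matrix.transpose_mul, Matrix.mul_assoc]
  rw [← Matrix.mul_assoc (((TBT m n t)⁻¹)ᵀ) ((TBT m n t)ᵀ) (M32 m n * flipU n), hRT,
    Matrix.one_mul]

lemma Ufull (m n : ℕ) (t : ℤ → ℤ → ℂ) (hT : IsUnit (TBT m n t)) :
    UmnM m n * GammaFull m n t
      = (GammaHatFull m n t)ᵀ * DJU m n
        + fromCols (fromCols (EcolId m n * flipU m) 0)
            (fromCols (M32 m n * flipU n) 0) := by
  rw [GammaFull, Matrix.mul_fromCols, E1lem m n t hT, E2lem m n t hT,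
    GammaHatFull, Matrix.transpose_fromRows, DJU, Matrix.fromCols_mul_fromBlocks,
    fromCols_add]
  rw [Matrix.mul_zero, Matrix.mul_zero, add_zero, zero_add]

lemma star_onesV (X : Type*) : star (onesV X) = onesV X := by
  funext x
  simp [onesV]

lemma vecMul_flipU (r : ℕ) (v : Fin r → ℂ) :
    v ᵥ* flipU r = fun k => v k.rev := by
  funext k
  simp only [vecMul, dotProduct]
  rw [Finset.sum_congr rfl (fun q _ => by rw [flipU_apply' r q k])]
  simp [mul_ite]

/-- action of `J₂ₖU₂ₖ` on a `col[0; w]` style row vector -/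
lemma JU_vecMul (k : ℕ) (w : Fin k → ℂ) :
    Sum.elim (0 : Fin k → ℂ) w ᵥ* (J2 k * U2 k)
      = Sum.elim (fun j => -w j.rev) (0 : Fin k → ℂ) := by
  rw [JU, Matrix.vecMul_fromBlocks]
  simp only [Matrix.vecMul_zero, Matrix.zero_vecMul, add_zero, zero_add, Matrix.vecMul_neg]
  funext y
  cases y <;> simp [vecMul_flipU]

lemma VE_lem (m n : ℕ) {u1 u2 : ℂ} (hu1 : u1 ≠ Complex.I / 2) :
    (fun r : Fin n × Fin m => gvv n u1 r.1 * gvv m u2 r.2) ᵥ* (EcolId m n * flipU m)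
      = fun j : Fin m => (Complex.I * (psiM u1 ^ n - 1)) * gvv m u2 j.rev := by
  funext j
  rw [mul_flipU]
  simp only [vecMul, dotProduct, of_apply, EcolId]
  rw [sum_collapse_snd (fun r : Fin n × Fin m => gvv n u1 r.1 * gvv m u2 r.2) j.rev]
  dsimp only
  rw [← Finset.sum_mul, sum_gvv n hu1]

lemma VM32_lem (m n : ℕ) {u1 u2 : ℂ} (hu2 : u2 ≠ Complex.I / 2) :
    (fun r : Fin n × Fin m => gvv n u1 r.1 * gvv m u2 r.2) ᵥ* (M32 m n * flipU n)
      = fun q : Fin n => (Complex.I * (psiM u2 ^ m - 1)) * gvv n u1 q.rev := by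
  funext q
  rw [mul_flipU]
  simp only [vecMul, dotProduct, of_apply, M32, M22, conjTranspose_apply,
    apply_ite (star : ℂ → ℂ), star_one, star_zero]
  rw [sum_collapse_fst (fun r : Fin n × Fin m => gvv n u1 r.1 * gvv m u2 r.2) q.rev]
  dsimp only
  rw [← Finset.mul_sum, sum_gvv m hu2]
  ring

lemma hpow_lem {u : ℂ} (hu : u ≠ Complex.I / 2) (hu' : u ≠ -(Complex.I / 2)) (k : ℕ) :
    ((u - Complex.I / 2) / (u + Complex.I / 2)) ^ k * psiM u ^ k = 1 := by
  rw [← mul_pow]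
  have : (u - Complex.I / 2) / (u + Complex.I / 2) * psiM u = 1 := by
    rw [psiM, div_mul_div_comm, div_eq_one_iff_eq (mul_ne_zero (hd_ne' hu') (hd_ne hu))]
    ring
  rw [this, one_pow]

lemma residualId (m n : ℕ) {u1 u2 : ℂ}
    (hu1 : u1 ≠ Complex.I / 2) (hu1' : u1 ≠ -(Complex.I / 2))
    (hu2 : u2 ≠ Complex.I / 2) (hu2' : u2 ≠ -(Complex.I / 2)) :
    (((u1 - Complex.I / 2) / (u1 + Complex.I / 2)) ^ n *
        ((u2 - Complex.I / 2) / (u2 + Complex.I / 2)) ^ m)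
      • ((fun r : Fin n × Fin m => gvv n u1 r.1 * gvv m u2 r.2) ᵥ*
          fromCols (fromCols (EcolId m n * flipU m) 0)
            (fromCols (M32 m n * flipU n) 0))
    - Complex.I • Sum.elim
        (Sum.elim (onesV (Fin m) ᵥ* ((calA2 m)ᴴ - u2 • 1)⁻¹) (0 : Fin m → ℂ))
        (Sum.elim (onesV (Fin n) ᵥ* ((calA1 n)ᴴ - u1 • 1)⁻¹) (0 : Fin n → ℂ))
    = (((u1 - Complex.I / 2) / (u1 + Complex.I / 2)) ^ n *
        ((u2 - Complex.I / 2) / (u2 + Complex.I / 2)) ^ m)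
      • ((Complex.I • Sum.elim
            (Sum.elim (0 : Fin m → ℂ) ((calA2 m - u2 • 1)⁻¹ *ᵥ onesV (Fin m)))
            (Sum.elim (0 : Fin n → ℂ) ((calA1 n - u1 • 1)⁻¹ *ᵥ onesV (Fin n))))
          ᵥ* DJU m n) := by
  have hpow1 := hpow_lem hu1 hu1' n
  have hpow2 := hpow_lem hu2 hu2' m
  rw [calA1_eq]
  rw [calA2H_vecMul m hu2', calA2H_vecMul n hu1',
    calA2_inv_mulVec m hu2, calA2_inv_mulVec n hu1]
  rw [Matrix.vecMul_fromCols, Matrix.vecMul_fromCols, Matrix.vecMul_fromCols,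
    Matrix.vecMul_zero, Matrix.vecMul_zero, VE_lem m n hu1, VM32_lem m n hu2]
  rw [Matrix.smul_vecMul, DJU, Matrix.vecMul_fromBlocks]
  simp only [Sum.elim_comp_inl, Sum.elim_comp_inr, Matrix.vecMul_zero, add_zero, zero_add]
  rw [JU_vecMul m (gvv m u2), JU_vecMul n (gvv n u1)]
  funext x
  obtain (j | j) | (q | q) := x
  · simp only [Pi.smul_apply, Pi.sub_apply, Sum.elim_inl, Sum.elim_inr, smul_eq_mul,
      Pi.zero_apply, Pi.neg_apply]
    rw [gvv_neg m hu2 hu2' j]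
    linear_combination (Complex.I * ((u2 - Complex.I / 2) / (u2 + Complex.I / 2)) ^ m
      * gvv m u2 j.rev) * hpow1
  · simp
  · simp only [Pi.smul_apply, Pi.sub_apply, Sum.elim_inl, Sum.elim_inr, smul_eq_mul,
      Pi.zero_apply, Pi.neg_apply]
    rw [gvv_neg n hu1 hu1' q]
    linear_combination (Complex.I * ((u1 - Complex.I / 2) / (u1 + Complex.I / 2)) ^ n
      * gvv n u1 q.rev) * hpow2
  · simp

/-- `u(μ)` expressed via `û(μ)^τ diag{J_{2m}U_{2m}, J_{2n}U_{2n}}`. -/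
theorem u_from_uHat (m n : ℕ) (hm : 0 < m) (hn : 0 < n) (t : ℤ → ℤ → ℂ)
    (hT : IsUnit (TBT m n t)) (u1 u2 : ℂ)
    (hu1 : u1 ≠ Complex.I / 2) (hu1' : u1 ≠ -(Complex.I / 2))
    (hu2 : u2 ≠ Complex.I / 2) (hu2' : u2 ≠ -(Complex.I / 2)) :
    uRow m n t u1 u2
      = (((u1 - Complex.I / 2) / (u1 + Complex.I / 2)) ^ n *
          ((u2 - Complex.I / 2) / (u2 + Complex.I / 2)) ^ m) •
          (uHatCol m n t u1 u2 ᵥ* DJU m n) := by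
  rw [uRow, uHatCol, star_onesV, star_onesV, star_onesV]
  -- right-hand side first
  rw [Matrix.mul_assoc (GammaHatFull m n t) ((A2 m n - u2 • 1)⁻¹) ((A1 m n - u1 • 1)⁻¹),
    ← Matrix.mulVec_mulVec (onesV (Fin n × Fin m)) (GammaHatFull m n t)
      ((A2 m n - u2 • 1)⁻¹ * (A1 m n - u1 • 1)⁻¹),
    bigResolvent m n hu1 hu2]
  rw [Matrix.add_vecMul, smul_add]
  rw [← Matrix.vecMul_transpose (GammaHatFull m n t)
        (fun r : Fin n × Fin m => gvv n u1 r.1 * gvv m u2 r.2),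
    Matrix.vecMul_vecMul]
  -- left-hand side
  rw [← Matrix.vecMul_vecMul, rowW m n hu1' hu2', W_flip m n hu1 hu1' hu2 hu2',
    Matrix.smul_vecMul]
  rw [show UmnM m n *ᵥ (fun r : Fin n × Fin m => gvv n u1 r.1 * gvv m u2 r.2)
        = (fun r : Fin n × Fin m => gvv n u1 r.1 * gvv m u2 r.2) ᵥ* (UmnM m n)ᵀ from
      (Matrix.vecMul_transpose _ _).symm]
  rw [UmnM_symm, Matrix.vecMul_vecMul, Ufull m n t hT, Matrix.vecMul_add, smul_add]
  rw [add_sub_assoc]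
  exact congrArg _ (residualId m n hu1 hu1' hu2 hu2')


end
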